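/- Let λ and μ be partitions with at most k parts, with λ₁ = n−k and λ_k > 0, and let λ̄ = (n−k+1, λ₂, ..., λ_k), λ⁻ = (λ₂−1, ..., λ_k−1, 0). Then in R = ℤ[q, t₁,...,t_n][x]^{S_k}/J with torus indices mod n, s_{λ̄}(x|t)·s_μ(x|t) ≡ q · s_{λ⁻}(x|t)·s_μ(x|t) mod J. -/

import Mathlib

noncomputable section

/-- Coefficient ring `ℤ[q, t₁, …, tₙ]`: `none ↦ q`, `some i ↦ t_{i+1}`. -/
abbrev CoeffRing (n : ℕ) := MvPolynomial (Option (Fin n)) ℤ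

/-- The full polynomial ring in `x₁, …, x_k` over `ℤ[q, t₁, …, tₙ]`. -/
abbrev PolyRing (n k : ℕ) := MvPolynomial (Fin k) (CoeffRing n)

/-- The quantum parameter `q`. -/
def qvar (n : ℕ) : CoeffRing n := MvPolynomial.X none

/-- The torus weight `t_j`, with index reduced mod `n`
(representatives `{1, …, n}`). -/
def tvar (n : ℕ) (hn : 0 < n) (j : ℤ) : CoeffRing n :=
  MvPolynomial.X (some ⟨((j - 1) % (n : ℤ)).toNat, by
    have h0 : (0 : ℤ) < (n : ℤ) := by exact_mod_cast hn
    have h1 := Int.emod_nonneg (j - 1) h0.ne'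
    have h2 := Int.emod_lt_of_pos (j - 1) h0
    omega⟩)

/-- The factorial complete homogeneous polynomial `h_m(x | τ^{-s} t)`:
the factorial Schur polynomial of the one-row partition `(m)`, with torus
weights shifted by `τ^{-s}` (i.e. `t_i` replaced by `t_{i-s}`). -/
def hfac (n k : ℕ) (hn : 0 < n) (m : ℕ) (s : ℤ) : PolyRing n k :=
  ∑ f ∈ Finset.univ.filter (fun f : Fin m → Fin k => ∀ a b : Fin m, a ≤ b → f a ≤ f b),
    ∏ j : Fin m,
      (MvPolynomial.X (f j) -
        MvPolynomial.C (tvar n hn (((f j : ℕ) : ℤ) + 1 + ((j : ℕ) : ℤ) - s)))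

/-- `hfac` extended to integer degrees (zero in negative degrees). -/
def hzfac (n k : ℕ) (hn : 0 < n) (m s : ℤ) : PolyRing n k :=
  if 0 ≤ m then hfac n k hn m.toNat s else 0

/-- The quantum ideal
`J = ⟨h_{n-k+1}(x|t), …, h_{n-1}(x|t), h_n(x|t) + (-1)^k q⟩`. -/
def Jideal (n k : ℕ) (hn : 0 < n) : Ideal (PolyRing n k) :=
  Ideal.span
    (((fun m => hfac n k hn m 0) '' {m : ℕ | n - k + 1 ≤ m ∧ m ≤ n - 1}) ∪
      {hfac n k hn n 0 + (-1 : PolyRing n k) ^ k * MvPolynomial.C (qvar n)})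

/-- The factorial Schur polynomial, via the factorial Jacobi–Trudi formula
`s_λ(x|t) = det (h_{λ_i + j - i}(x | τ^{1-j} t))_{1 ≤ i,j ≤ k}`. -/
def sfac (n k : ℕ) (hn : 0 < n) (lam : Fin k → ℕ) : PolyRing n k :=
  Matrix.det (Matrix.of fun i j : Fin k =>
    hzfac n k hn ((lam i : ℤ) + ((j : ℕ) : ℤ) - ((i : ℕ) : ℤ)) ((j : ℕ) : ℤ))

/-- cut version: values below `L` -/
def Hg (n k : ℕ) (hn : 0 < n) (m : ℕ) (s : ℤ) (L : ℕ) : PolyRing n k :=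
  ∑ f ∈ Finset.univ.filter (fun f : Fin m → Fin k =>
      (∀ a b : Fin m, a ≤ b → f a ≤ f b) ∧ ∀ j, (f j : ℕ) < L),
    ∏ j : Fin m,
      (MvPolynomial.X (f j) -
        MvPolynomial.C (tvar n hn (((f j : ℕ) : ℤ) + 1 + ((j : ℕ) : ℤ) - s)))

def Hpred (n k : ℕ) (hn : 0 < n) : ℕ → ℤ → ℕ → PolyRing n k
  | 0, _, _ => 0
  | m + 1, s, L => Hg n k hn m s L

@[simp] lemma Hpred_zero (n k : ℕ) (hn : 0 < n) (s : ℤ) (L : ℕ) :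
    Hpred n k hn 0 s L = 0 := rfl

@[simp] lemma Hpred_succ (n k : ℕ) (hn : 0 < n) (m : ℕ) (s : ℤ) (L : ℕ) :
    Hpred n k hn (m+1) s L = Hg n k hn m s L := rfl

lemma hfac_eq_Hg (n k : ℕ) (hn : 0 < n) (m : ℕ) (s : ℤ) :
    hfac n k hn m s = Hg n k hn m s k := by
  unfold hfac Hg
  congr 1
  apply Finset.filter_congr
  intro f _
  exact ⟨fun h => ⟨h, fun j => (f j).isLt⟩, fun h => h.1⟩

@[simp] lemma Hg_zero (n k : ℕ) (hn : 0 < n) (s : ℤ) (L : ℕ) :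
    Hg n k hn 0 s L = 1 := by
  unfold Hg
  rw [Finset.filter_true_of_mem (fun f _ => ⟨fun a => a.elim0, fun j => j.elim0⟩)]
  simp

@[simp] lemma Hg_L_zero (n k : ℕ) (hn : 0 < n) (m : ℕ) (s : ℤ) :
    Hg n k hn (m+1) s 0 = 0 := by
  unfold Hg
  rw [Finset.filter_false_of_mem, Finset.sum_empty]
  intro f _ h
  exact Nat.not_lt_zero _ (h.2 0)

open MvPolynomial in
lemma HgA (n k : ℕ) (hn : 0 < n) (m : ℕ) (s : ℤ) (L : ℕ) (hL : L < k) (c : ℤ)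
    (hc : c = (L : ℤ) + m - s) :
    Hg n k hn m s (L+1) = Hg n k hn m s L +
      (MvPolynomial.X ⟨L, hL⟩ - MvPolynomial.C (tvar n hn c)) * Hpred n k hn m s (L+1) := by
  classical
  cases m with
  | zero => simp
  | succ m' =>
    subst hc
    simp only [Hpred_succ]
    have key := Finset.sum_filter_add_sum_filter_not
      (Finset.univ.filter (fun f : Fin (m'+1) → Fin k =>
        (∀ a b : Fin (m'+1), a ≤ b → f a ≤ f b) ∧ ∀ j, (f j : ℕ) < L+1))
      (fun f => (f (Fin.last m') : ℕ) < L)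
      (fun f => ∏ j : Fin (m'+1),
        (MvPolynomial.X (f j) -
          MvPolynomial.C (tvar n hn (((f j : ℕ) : ℤ) + 1 + ((j : ℕ) : ℤ) - s))))
    rw [Finset.filter_filter, Finset.filter_filter] at key
    have hset1 : (Finset.univ.filter (fun f : Fin (m'+1) → Fin k =>
        ((∀ a b : Fin (m'+1), a ≤ b → f a ≤ f b) ∧ ∀ j, (f j : ℕ) < L+1) ∧
          (f (Fin.last m') : ℕ) < L)) =
        (Finset.univ.filter (fun f : Fin (m'+1) → Fin k =>
          (∀ a b : Fin (m'+1), a ≤ b → f a ≤ f b) ∧ ∀ j, (f j : ℕ) < L)) := by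
      apply Finset.filter_congr
      intro f _
      constructor
      · rintro ⟨⟨hmono, _⟩, hlast⟩
        exact ⟨hmono, fun j => lt_of_le_of_lt (hmono j (Fin.last m') (Fin.le_last j)) hlast⟩
      · rintro ⟨hmono, hlt⟩
        exact ⟨⟨hmono, fun j => Nat.lt_succ_of_lt (hlt j)⟩, hlt (Fin.last m')⟩
    have hsum2 : (∑ f ∈ Finset.univ.filter (fun f : Fin (m'+1) → Fin k =>
        ((∀ a b : Fin (m'+1), a ≤ b → f a ≤ f b) ∧ ∀ j, (f j : ℕ) < L+1) ∧
          ¬ (f (Fin.last m') : ℕ) < L),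
        ∏ j : Fin (m'+1),
          (MvPolynomial.X (f j) -
            MvPolynomial.C (tvar n hn (((f j : ℕ) : ℤ) + 1 + ((j : ℕ) : ℤ) - s)))) =
        (MvPolynomial.X (⟨L, hL⟩ : Fin k) -
          MvPolynomial.C (tvar n hn ((L : ℤ) + ((m'+1 : ℕ) : ℤ) - s))) * Hg n k hn m' s (L+1) := by
      rw [Hg, Finset.mul_sum]
      apply Finset.sum_bij' (i := fun f _ => f ∘ Fin.castSucc)
        (j := fun g _ => Fin.snoc g (⟨L, hL⟩ : Fin k))
      · rintro f hf
        rw [Finset.mem_filter] at hf ⊢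
        obtain ⟨-, ⟨hmono, hlt⟩, -⟩ := hf
        exact ⟨Finset.mem_univ _,
          fun a b hab => hmono _ _ (by simpa using hab), fun j => hlt _⟩
      · rintro g hg
        rw [Finset.mem_filter] at hg ⊢
        obtain ⟨-, hmono, hlt⟩ := hg
        have hgle : ∀ j, g j ≤ (⟨L, hL⟩ : Fin k) := fun j =>
          Fin.le_def.mpr (by simpa using Nat.lt_succ_iff.mp (hlt j))
        refine ⟨Finset.mem_univ _, ⟨?_, ?_⟩, ?_⟩
        · intro a b hab
          induction b using Fin.lastCases with
          | last =>
            rw [Fin.snoc_last]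
            induction a using Fin.lastCases with
            | last => rw [Fin.snoc_last]
            | cast a' => rw [Fin.snoc_castSucc]; exact hgle a'
          | cast b' =>
            induction a using Fin.lastCases with
            | last =>
              exfalso
              have := Fin.le_def.mp hab
              simp only [Fin.val_last, Fin.coe_castSucc] at this
              omega
            | cast a' =>
              rw [Fin.snoc_castSucc, Fin.snoc_castSucc]
              exact hmono a' b' (by simpa using hab)
        · intro j
          induction j using Fin.lastCases with
          | last => rw [Fin.snoc_last]; exact Nat.lt_succ_self L
          | cast j' => rw [Fin.snoc_castSucc]; exact hlt j'
        · rw [Fin.snoc_last]; simp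
      · rintro f hf
        rw [Finset.mem_filter] at hf
        obtain ⟨-, ⟨hmono, hlt⟩, hlast⟩ := hf
        have hfl : f (Fin.last m') = (⟨L, hL⟩ : Fin k) := by
          have h1 := hlt (Fin.last m')
          exact Fin.ext (show ((f (Fin.last m')):ℕ) = L by omega)
        funext j
        induction j using Fin.lastCases with
        | last => rw [Fin.snoc_last, hfl]
        | cast j' => rw [Fin.snoc_castSucc]; rfl
      · rintro g hg
        funext j
        simp [Fin.snoc_castSucc]
      · rintro f hf
        rw [Finset.mem_filter] at hf
        obtain ⟨-, ⟨hmono, hlt⟩, hlast⟩ := hf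
        have hfl : f (Fin.last m') = (⟨L, hL⟩ : Fin k) := by
          have h1 := hlt (Fin.last m')
          exact Fin.ext (show ((f (Fin.last m')):ℕ) = L by omega)
        rw [Fin.prod_univ_castSucc, mul_comm]
        have harg : ((L : ℤ) + ((m'+1 : ℕ) : ℤ) - s) =
            (((f (Fin.last m') : ℕ) : ℤ) + 1 + (((Fin.last m' : Fin (m'+1)) : ℕ) : ℤ) - s) := by
          rw [hfl]; push_cast; ring
        rw [← hfl, harg]
        rfl
    rw [Hg, ← key, hset1, hsum2, ← Hg]

lemma HgQ (n k : ℕ) (hn : 0 < n) :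
    ∀ (m L : ℕ), L ≤ k → ∀ (s c : ℤ), c = (m : ℤ) + L - 1 - s →
    Hg n k hn m (s+1) L = Hg n k hn m s L +
      (MvPolynomial.C (tvar n hn c) - MvPolynomial.C (tvar n hn (-s))) *
        Hpred n k hn m s L := by
  intro m
  induction m with
  | zero => intro L _ s c _; simp
  | succ m ihm =>
    intro L
    induction L with
    | zero =>
      intro _ s c hc
      cases m with
      | zero =>
        have hc2 : c = -s := by push_cast at hc; linarith
        subst hc2; simp
      | succ m'' => simp
    | succ L ihL =>
      intro hLk s c hc
      have hL : L < k := hLk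
      have h1 := HgA n k hn (m+1) (s+1) L hL ((m:ℤ)+L-s) (by push_cast; ring)
      have h2 := ihm (L+1) hLk s ((m:ℤ)+L-s) (by push_cast; ring)
      have h3 := ihL (Nat.le_of_succ_le hLk) s ((m:ℤ)+L-s) (by push_cast; ring)
      have h4 := HgA n k hn (m+1) s L hL ((m:ℤ)+L+1-s) (by push_cast; ring)
      have h5 := HgA n k hn m s L hL ((m:ℤ)+L-s) (by push_cast; ring)
      have hc2 : c = (m:ℤ)+L+1-s := by push_cast at hc ⊢; linarith
      rw [hc2]
      simp only [Hpred_succ] at h1 h2 h3 h4 h5 ⊢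
      linear_combination h1 + h3 +
        (MvPolynomial.X (⟨L,hL⟩ : Fin k) -
          MvPolynomial.C (tvar n hn ((m:ℤ)+L-s))) * h2 - h4 -
        (MvPolynomial.C (tvar n hn ((m:ℤ)+L-s)) -
          MvPolynomial.C (tvar n hn (-s))) * h5

lemma hfac_rec (n k : ℕ) (hn : 0 < n) (m : ℕ) (s c : ℤ)
    (hc : c = (m : ℤ) + (k : ℤ) - s) :
    hfac n k hn (m+1) (s+1) = hfac n k hn (m+1) s +
      (MvPolynomial.C (tvar n hn c) - MvPolynomial.C (tvar n hn (-s))) *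
        hfac n k hn m s := by
  rw [hfac_eq_Hg, hfac_eq_Hg, hfac_eq_Hg]
  have := HgQ n k hn (m+1) k le_rfl s c (by push_cast; linarith)
  simpa using this

lemma claimC (n k : ℕ) (hn : 0 < n) (hk : 0 < k) (hkn : k ≤ n) :
    ∀ (s m : ℕ), n - k + 1 + s ≤ m → m ≤ n →
    hfac n k hn m (s : ℤ) -
      (if m = n then -((-1 : PolyRing n k)^k) * MvPolynomial.C (qvar n) else 0)
      ∈ Jideal n k hn := by
  intro s
  induction s with
  | zero =>
    intro m h1 h2
    by_cases hm : m = n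
    · rw [if_pos hm, hm]
      have hgen : hfac n k hn n 0 + (-1 : PolyRing n k)^k * MvPolynomial.C (qvar n)
          ∈ Jideal n k hn := Ideal.subset_span (Or.inr rfl)
      have hEq : hfac n k hn n ((0:ℕ) : ℤ) -
          (-((-1 : PolyRing n k)^k) * MvPolynomial.C (qvar n)) =
          hfac n k hn n 0 + (-1 : PolyRing n k)^k * MvPolynomial.C (qvar n) := by
        push_cast; ring
      rw [hEq]; exact hgen
    · rw [if_neg hm, sub_zero]
      have : ((0:ℕ) : ℤ) = 0 := rfl
      rw [this]
      exact Ideal.subset_span (Or.inl ⟨m, ⟨by omega, by omega⟩, rfl⟩)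
  | succ s ih =>
    intro m h1 h2
    obtain ⟨m', rfl⟩ : ∃ m', m = m' + 1 := ⟨m - 1, by omega⟩
    have hrec := hfac_rec n k hn m' (s : ℤ) ((m' : ℤ) + (k : ℤ) - s) rfl
    have ha := ih (m' + 1) (by omega) h2
    have hb := ih m' (by omega) (by omega)
    rw [if_neg (by omega), sub_zero] at hb
    have hmem := (Jideal n k hn).add_mem ha
      ((Jideal n k hn).mul_mem_left
        (MvPolynomial.C (tvar n hn ((m' : ℤ) + (k : ℤ) - s)) -
          MvPolynomial.C (tvar n hn (-(s : ℤ)))) hb)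
    have hEq : hfac n k hn (m' + 1) ((s + 1 : ℕ) : ℤ) -
        (if m' + 1 = n then -((-1 : PolyRing n k)^k) * MvPolynomial.C (qvar n) else 0) =
        (hfac n k hn (m' + 1) (s : ℤ) -
          (if m' + 1 = n then -((-1 : PolyRing n k)^k) * MvPolynomial.C (qvar n) else 0)) +
        (MvPolynomial.C (tvar n hn ((m' : ℤ) + (k : ℤ) - s)) -
          MvPolynomial.C (tvar n hn (-(s : ℤ)))) * hfac n k hn m' (s : ℤ) := by
      push_cast
      linear_combination hrec
    rw [hEq]; exact hmem


lemma hfac_zero (n k : ℕ) (hn : 0 < n) (s : ℤ) : hfac n k hn 0 s = 1 := by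
  rw [hfac_eq_Hg, Hg_zero]

lemma det_row_mem {R : Type*} [CommRing R] {N : ℕ} (J : Ideal R)
    (M : Matrix (Fin N) (Fin N) R) (i0 : Fin N) (h : ∀ j, M i0 j ∈ J) :
    M.det ∈ J := by
  rw [Matrix.det_apply]
  apply Ideal.sum_mem
  intro s _
  have hmem : (∏ i, M (s i) i) ∈ J := by
    rw [← Finset.mul_prod_erase Finset.univ _ (Finset.mem_univ (s⁻¹ i0))]
    have hs : s (s⁻¹ i0) = i0 := Equiv.apply_symm_apply s i0
    rw [hs]
    exact Ideal.mul_mem_right _ _ (h _)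
  have hz : Equiv.Perm.sign s • (∏ i, M (s i) i) =
      ((Equiv.Perm.sign s : ℤ) : R) * ∏ i, M (s i) i := by
    simp [Units.smul_def, zsmul_eq_mul]
  rw [hz]
  exact Ideal.mul_mem_left _ _ hmem

/-- For partitions `λ, μ` with at most `k` parts, `λ₁ = n-k`, `λ_k > 0`, with
`λ̄ = (n-k+1, λ₂, …, λ_k)` and `λ⁻ = (λ₂-1, …, λ_k-1, 0)`:
`s_{λ̄}(x|t) ⬝ s_μ(x|t) ≡ q ⬝ s_{λ⁻}(x|t) ⬝ s_μ(x|t) mod J` (torus indices mod `n`). -/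
theorem sfac_bar_mul_eq_q_sfac_minus_mul (n k : ℕ) (hn : 0 < n) (hk : 0 < k)
    (hkn : k ≤ n) (lam mu : Fin k → ℕ) (hlam : Antitone lam) (hmu : Antitone mu)
    (htop : lam ⟨0, hk⟩ = n - k) (hbot : 0 < lam ⟨k - 1, Nat.sub_lt hk one_pos⟩) :
    sfac n k hn (Function.update lam ⟨0, hk⟩ (n - k + 1)) * sfac n k hn mu -
      MvPolynomial.C (qvar n) *
        (sfac n k hn (fun i => if h : (i : ℕ) + 1 < k then lam ⟨(i : ℕ) + 1, h⟩ - 1 else 0) *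
          sfac n k hn mu)
      ∈ Jideal n k hn := by
  classical
  obtain ⟨k', rfl⟩ : ∃ k', k = k' + 1 := ⟨k - 1, by omega⟩
  set J := Jideal n (k'+1) hn with hJ
  set lamb : Fin (k'+1) → ℕ := Function.update lam ⟨0, hk⟩ (n - (k'+1) + 1) with hlamb
  set lamm : Fin (k'+1) → ℕ :=
    fun i => if h : (i : ℕ) + 1 < k'+1 then lam ⟨(i : ℕ) + 1, h⟩ - 1 else 0 with hlamm
  set A : Matrix (Fin (k'+1)) (Fin (k'+1)) (PolyRing n (k'+1)) :=
    Matrix.of (fun i j : Fin (k'+1) =>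
      hzfac n (k'+1) hn ((lamb i : ℤ) + ((j : ℕ) : ℤ) - ((i : ℕ) : ℤ)) ((j : ℕ) : ℤ)) with hA
  set B : Matrix (Fin (k'+1)) (Fin (k'+1)) (PolyRing n (k'+1)) :=
    Matrix.of (fun i j : Fin (k'+1) =>
      hzfac n (k'+1) hn ((lamm i : ℤ) + ((j : ℕ) : ℤ) - ((i : ℕ) : ℤ)) ((j : ℕ) : ℤ)) with hB
  have hsA : sfac n (k'+1) hn lamb = A.det := rfl
  have hsB : sfac n (k'+1) hn lamm = B.det := rfl
  set E : PolyRing n (k'+1) := (-1 : PolyRing n (k'+1))^k' * MvPolynomial.C (qvar n) with hE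
  set v : Fin (k'+1) → PolyRing n (k'+1) :=
    fun j => if j = Fin.last k' then E else 0 with hv
  have hrow : ∀ j : Fin (k'+1), A 0 j - v j ∈ J := by
    intro j
    have hA0 : A 0 j = hfac n (k'+1) hn (n - (k'+1) + 1 + (j : ℕ)) ((j : ℕ) : ℤ) := by
      show hzfac n (k'+1) hn ((lamb 0 : ℤ) + ((j : ℕ) : ℤ) - (((0 : Fin (k'+1)) : ℕ) : ℤ))
          ((j : ℕ) : ℤ) = _
      have hl0 : lamb 0 = n - (k'+1) + 1 := by
        rw [hlamb]
        have : (⟨0, hk⟩ : Fin (k'+1)) = 0 := rfl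
        rw [this, Function.update_self]
      rw [hl0]
      have harg : ((n - (k'+1) + 1 : ℕ) : ℤ) + ((j : ℕ) : ℤ) - (((0 : Fin (k'+1)) : ℕ) : ℤ) =
          ((n - (k'+1) + 1 + (j : ℕ) : ℕ) : ℤ) := by push_cast [Fin.val_zero]; ring
      rw [harg, hzfac, if_pos (Int.natCast_nonneg _), Int.toNat_natCast]
    have hclaim := claimC n (k'+1) hn hk hkn (j : ℕ) (n - (k'+1) + 1 + (j : ℕ))
      le_rfl (by omega)
    by_cases hj : j = Fin.last k'
    · have hjv : (j : ℕ) = k' := by rw [hj]; rfl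
      rw [if_pos (by omega)] at hclaim
      have hEE : -((-1 : PolyRing n (k'+1))^(k'+1)) * MvPolynomial.C (qvar n) = E := by
        rw [hE, pow_succ]; ring
      rw [hEE] at hclaim
      rw [hv]
      simp only [if_pos hj]
      rw [hA0]
      exact hclaim
    · have hjv : (j : ℕ) ≠ k' := by
        intro hc; exact hj (Fin.ext (by simp [hc]))
      have hjlt : (j : ℕ) < k' := by have := j.isLt; omega
      rw [if_neg (by omega), sub_zero] at hclaim
      rw [hv]
      simp only [if_neg hj]
      rw [sub_zero, hA0]
      exact hclaim
  have hdet1 : A.det - (A.updateRow 0 v).det ∈ J := by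
    have hu : (fun j => A 0 j - v j) + v = A 0 := by funext j; simp
    have h2 := Matrix.det_updateRow_add A 0 (fun j => A 0 j - v j) v
    rw [hu, Matrix.updateRow_eq_self] at h2
    have hcalc : A.det - (A.updateRow 0 v).det =
        (A.updateRow 0 (fun j => A 0 j - v j)).det := by linear_combination h2
    rw [hcalc]
    apply det_row_mem J _ 0
    intro j
    have : (A.updateRow 0 (fun j => A 0 j - v j)) 0 j = A 0 j - v j := by
      rw [Matrix.updateRow_self]
    rw [this]
    exact hrow j
  have hsub : (A.updateRow 0 v).submatrix Fin.succ (Fin.last k').succAbove =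
      A.submatrix Fin.succ (Fin.last k').succAbove := by
    ext i j
    simp [Matrix.submatrix, Matrix.updateRow_ne (Fin.succ_ne_zero i)]
  have hdet2 : (A.updateRow 0 v).det =
      MvPolynomial.C (qvar n) * (A.submatrix Fin.succ (Fin.last k').succAbove).det := by
    rw [Matrix.det_succ_row_zero]
    rw [Finset.sum_eq_single (Fin.last k')]
    · have hentry : (A.updateRow 0 v) 0 (Fin.last k') = E := by
        rw [Matrix.updateRow_self]; simp [hv]
      rw [hentry, hsub, hE]
      have : ((Fin.last k' : Fin (k'+1)) : ℕ) = k' := rfl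
      rw [this]
      have hpow1 : (-1 : PolyRing n (k'+1))^k' * (-1 : PolyRing n (k'+1))^k' = 1 := by
        rw [← pow_add, ← two_mul, pow_mul]; norm_num
      linear_combination (MvPolynomial.C (qvar n) *
        (A.submatrix Fin.succ (Fin.last k').succAbove).det) * hpow1
    · intro j _ hj
      have : (A.updateRow 0 v) 0 j = 0 := by
        rw [Matrix.updateRow_self]; simp [hv, hj]
      rw [this]; ring
    · intro h; exact absurd (Finset.mem_univ _) h
  have hlampos : ∀ i : Fin k', 1 ≤ lam i.succ := by
    intro i
    have hlast : (⟨k'+1-1, Nat.sub_lt hk one_pos⟩ : Fin (k'+1)) = Fin.last k' := rfl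
    rw [hlast] at hbot
    exact le_trans hbot (hlam (Fin.le_last i.succ))
  have hdet4 : A.submatrix Fin.succ (Fin.last k').succAbove =
      B.submatrix Fin.castSucc Fin.castSucc := by
    rw [Fin.succAbove_last]
    refine Matrix.ext fun i j => ?_
    show hzfac n (k'+1) hn ((lamb i.succ : ℤ) + ((j.castSucc : ℕ) : ℤ) - ((i.succ : ℕ) : ℤ))
        ((j.castSucc : ℕ) : ℤ) =
      hzfac n (k'+1) hn ((lamm i.castSucc : ℤ) + ((j.castSucc : ℕ) : ℤ) - ((i.castSucc : ℕ) : ℤ))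
        ((j.castSucc : ℕ) : ℤ)
    have hlb : lamb i.succ = lam i.succ := by
      rw [hlamb]
      apply Function.update_of_ne
      intro hc
      have : (i.succ : ℕ) = 0 := by rw [hc]
      simp at this
    have hlm : lamm i.castSucc = lam i.succ - 1 := by
      rw [hlamm]
      have hpos : (i.castSucc : ℕ) + 1 < k'+1 := by
        have := i.isLt; simp [Fin.coe_castSucc]
      simp only [dif_pos hpos]
      rfl
    rw [hlb, hlm]
    congr 1
    have h1 := hlampos i
    have hcast : ((lam i.succ - 1 : ℕ) : ℤ) = (lam i.succ : ℤ) - 1 := by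
      exact_mod_cast Int.ofNat_sub h1
    rw [hcast]
    have hsv : ((i.succ : ℕ) : ℤ) = ((i.castSucc : ℕ) : ℤ) + 1 := by
      simp [Fin.val_succ, Fin.coe_castSucc]
    rw [hsv]
    ring
  have hdet3 : B.det = (B.submatrix Fin.castSucc Fin.castSucc).det := by
    rw [Matrix.det_succ_row B (Fin.last k')]
    rw [Finset.sum_eq_single (Fin.last k')]
    · have hlmlast : lamm (Fin.last k') = 0 := by
        rw [hlamm]
        have : ¬ ((Fin.last k' : ℕ) + 1 < k'+1) := by simp
        simp only [dif_neg this]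
      have hentry : B (Fin.last k') (Fin.last k') = 1 := by
        show hzfac n (k'+1) hn _ _ = 1
        rw [hlmlast]
        have harg : ((0 : ℕ) : ℤ) + (((Fin.last k' : Fin (k'+1)) : ℕ) : ℤ) -
            (((Fin.last k' : Fin (k'+1)) : ℕ) : ℤ) = 0 := by ring
        rw [harg, hzfac, if_pos le_rfl]
        exact hfac_zero n (k'+1) hn _
      rw [hentry, Fin.succAbove_last]
      have : ((Fin.last k' : Fin (k'+1)) : ℕ) = k' := rfl
      rw [this]
      have hpow : (-1 : PolyRing n (k'+1))^(k' + k') = 1 := by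
        rw [← two_mul, pow_mul]; norm_num
      rw [hpow]; ring
    · intro j _ hj
      have hjlt : (j : ℕ) < k' := by
        have := j.isLt
        have : (j : ℕ) ≠ k' := by intro hc; exact hj (Fin.ext (by simp [hc]))
        omega
      have hlmlast : lamm (Fin.last k') = 0 := by
        rw [hlamm]
        have : ¬ ((Fin.last k' : ℕ) + 1 < k'+1) := by simp
        simp only [dif_neg this]
      have hentry : B (Fin.last k') j = 0 := by
        show hzfac n (k'+1) hn _ _ = 0
        rw [hlmlast, hzfac, if_neg]
        show ¬ (0 ≤ ((0:ℕ) : ℤ) + ((j : ℕ) : ℤ) - (((Fin.last k' : Fin (k'+1)) : ℕ) : ℤ))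
        have : ((Fin.last k' : Fin (k'+1)) : ℕ) = k' := rfl
        rw [this]
        push_cast
        omega
      rw [hentry]; ring
    · intro h; exact absurd (Finset.mem_univ _) h
  have hkey : A.det - MvPolynomial.C (qvar n) * B.det ∈ J := by
    have heq : A.det - MvPolynomial.C (qvar n) * B.det =
        A.det - (A.updateRow 0 v).det := by
      rw [hdet2, hdet4, ← hdet3]
    rw [heq]
    exact hdet1
  have hfin := Ideal.mul_mem_right (sfac n (k'+1) hn mu) J hkey
  have hgoal : sfac n (k'+1) hn lamb * sfac n (k'+1) hn mu -
      MvPolynomial.C (qvar n) * (sfac n (k'+1) hn lamm * sfac n (k'+1) hn mu) =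
      (A.det - MvPolynomial.C (qvar n) * B.det) * sfac n (k'+1) hn mu := by
    rw [hsA, hsB]; ring
  rw [hgoal]
  exact hfin
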